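/- Let E be a real Hilbert space, f : E → ℝ a nonnegative differentiable function whose gradient ∇f is β-Lipschitz for some β > 0, and ĝ : E → E a map satisfying ‖ĝ(w) − ∇f(w)‖ ≤ Δ for all w ∈ E. Define iterates w^{(t+1)} = w^{(t)} − (1/β)·ĝ(w^{(t)}) from any initialization w^{(0)}. Then for every integer T ≥ 1: (1/T)·∑_{t=0}^{T−1} ‖∇f(w^{(t)})‖² ≤ (2β/T)·f(w^{(0)}) + Δ². (Convergence of SGD with uniformly bounded gradient noise on a smooth nonnegative loss.) -/

import Mathlib

open scoped NNReal

lemma descent_lemma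
    {E : Type*} [NormedAddCommGroup E] [InnerProductSpace ℝ E] [CompleteSpace E]
    (f : E → ℝ) (hfd : Differentiable ℝ f)
    (β : ℝ≥0) (hlip : LipschitzWith β (gradient f)) (x v : E) :
    f (x + v) ≤ f x + inner ℝ (gradient f x) v + (β : ℝ) / 2 * ‖v‖ ^ 2 := by
  have hφ : ∀ t : ℝ, HasDerivAt (fun t : ℝ => f (x + t • v))
      (inner ℝ (gradient f (x + t • v)) v : ℝ) t := by
    intro t
    have h1 : HasFDerivAt f ((InnerProductSpace.toDual ℝ E) (gradient f (x + t • v)))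
        (x + t • v) := (hfd _).hasGradientAt.hasFDerivAt
    have h2 : HasDerivAt (fun t : ℝ => x + t • v) v t := by
      simpa using ((hasDerivAt_id t).smul_const v).const_add x
    exact h1.comp_hasDerivAt t h2
  have hgradcont : Continuous (gradient f) := hlip.continuous
  have hcont : Continuous fun t : ℝ => (inner ℝ (gradient f (x + t • v)) v : ℝ) := by
    exact (hgradcont.comp (by continuity)).inner continuous_const
  have hFTC : ∫ t in (0:ℝ)..1, (inner ℝ (gradient f (x + t • v)) v : ℝ) =
      f (x + v) - f x := by
    have := intervalIntegral.integral_eq_sub_of_hasDerivAt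
      (f := fun t : ℝ => f (x + t • v)) (a := 0) (b := 1)
      (fun t _ => hφ t) (hcont.intervalIntegrable 0 1)
    simpa using this
  have hmono : ∫ t in (0:ℝ)..1, (inner ℝ (gradient f (x + t • v)) v : ℝ) ≤
      ∫ t in (0:ℝ)..1, (inner ℝ (gradient f x) v + (β : ℝ) * t * ‖v‖ ^ 2) := by
    apply intervalIntegral.integral_mono_on (by norm_num)
      (hcont.intervalIntegrable 0 1)
      ((by continuity : Continuous fun t : ℝ =>
        inner ℝ (gradient f x) v + (β : ℝ) * t * ‖v‖ ^ 2).intervalIntegrable 0 1)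
    intro t ht
    rw [Set.mem_Icc] at ht
    have h1 : (inner ℝ (gradient f (x + t • v)) v : ℝ) - inner ℝ (gradient f x) v
        = inner ℝ (gradient f (x + t • v) - gradient f x) v := by
      rw [inner_sub_left]
    have h2 : (inner ℝ (gradient f (x + t • v) - gradient f x) v : ℝ) ≤
        ‖gradient f (x + t • v) - gradient f x‖ * ‖v‖ :=
      real_inner_le_norm _ _
    have h3 : ‖gradient f (x + t • v) - gradient f x‖ ≤ (β : ℝ) * (t * ‖v‖) := by
      have := hlip.dist_le_mul (x + t • v) x
      rw [dist_eq_norm] at this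
      simpa [norm_smul, abs_of_nonneg ht.1] using this
    nlinarith [norm_nonneg v]
  have hint : ∫ t in (0:ℝ)..1, (inner ℝ (gradient f x) v + (β : ℝ) * t * ‖v‖ ^ 2)
      = inner ℝ (gradient f x) v + (β : ℝ) / 2 * ‖v‖ ^ 2 := by
    have h1 : Continuous fun t : ℝ => (β : ℝ) * t * ‖v‖ ^ 2 := by continuity
    rw [intervalIntegral.integral_add intervalIntegrable_const (h1.intervalIntegrable 0 1)]
    simp only [show ∀ t : ℝ, (β : ℝ) * t * ‖v‖ ^ 2 = ((β : ℝ) * ‖v‖ ^ 2) * t from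
      fun t => by ring]
    rw [intervalIntegral.integral_const_mul, integral_id]
    simp
    ring
  linarith [hFTC ▸ hmono.trans_eq hint]

/-- **Convergence of SGD with uniformly bounded gradient noise on a smooth nonnegative loss.**
If `f ≥ 0` is differentiable with `β`-Lipschitz gradient, and `‖gEst(w) - ∇f(w)‖ ≤ Δ` everywhere,
then the iterates `w_{t+1} = w_t - (1/β)·gEst(w_t)` satisfy
`(1/T)·∑_{t<T} ‖∇f(w_t)‖² ≤ (2β/T)·f(w₀) + Δ²`. -/
theorem noisy_gd_convergence
    {E : Type*} [NormedAddCommGroup E] [InnerProductSpace ℝ E] [CompleteSpace E]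
    (f : E → ℝ) (hf0 : ∀ w, 0 ≤ f w) (hfd : Differentiable ℝ f)
    (β : ℝ≥0) (hβ : 0 < β) (hfsmooth : LipschitzWith β (gradient f))
    (Δ : ℝ) (gEst : E → E) (hgEst : ∀ w : E, ‖gEst w - gradient f w‖ ≤ Δ)
    (wseq : ℕ → E)
    (hstep : ∀ t, wseq (t + 1) = wseq t - (1 / (β : ℝ)) • gEst (wseq t))
    (T : ℕ) (hT : 1 ≤ T) :
    (1 / T : ℝ) * ∑ t ∈ Finset.range T, ‖gradient f (wseq t)‖ ^ 2 ≤
      (2 * β / T) * f (wseq 0) + Δ ^ 2 := by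
  have hβR : (0 : ℝ) < β := hβ
  have hkey : ∀ t : ℕ, ‖gradient f (wseq t)‖ ^ 2 ≤
      2 * (β : ℝ) * (f (wseq t) - f (wseq (t + 1))) + Δ ^ 2 := by
    intro t
    set x := wseq t
    set g := gEst x
    set G := gradient f x
    set e := g - G with he
    have hde := descent_lemma f hfd β hfsmooth x (-((1 / (β : ℝ)) • g))
    have hxv : x + -((1 / (β : ℝ)) • g) = wseq (t + 1) := by
      rw [hstep t]; abel
    rw [hxv] at hde
    have hinner : (inner ℝ G (-((1 / (β : ℝ)) • g)) : ℝ) =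
        -(1 / (β : ℝ)) * (‖G‖ ^ 2 + inner ℝ G e) := by
      rw [inner_neg_right, real_inner_smul_right]
      have : g = G + e := by rw [he]; abel
      rw [this, inner_add_right, real_inner_self_eq_norm_sq]
      ring
    have hnorm : ‖-((1 / (β : ℝ)) • g)‖ ^ 2 =
        (1 / (β : ℝ)) ^ 2 * (‖G‖ ^ 2 + 2 * inner ℝ G e + ‖e‖ ^ 2) := by
      rw [norm_neg, norm_smul]
      have hg : g = G + e := by rw [he]; abel
      rw [hg, mul_pow, norm_add_sq_real G e]
      have : ‖(1 / (β:ℝ))‖ = 1 / (β:ℝ) := by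
        rw [Real.norm_eq_abs, abs_of_pos (by positivity)]
      rw [this]
    rw [hinner, hnorm] at hde
    have he2 : ‖e‖ ^ 2 ≤ Δ ^ 2 := by
      have := hgEst x
      nlinarith [norm_nonneg e]
    have hβne : (β : ℝ) ≠ 0 := ne_of_gt hβR
    have key : f (wseq (t+1)) ≤ f x - 1 / (2 * (β:ℝ)) * ‖G‖ ^ 2
        + 1 / (2 * (β:ℝ)) * ‖e‖ ^ 2 := by
      calc f (wseq (t+1)) ≤ f x + -(1 / (β:ℝ)) * (‖G‖ ^ 2 + inner ℝ G e)
            + (β:ℝ) / 2 * ((1 / (β:ℝ)) ^ 2 * (‖G‖ ^ 2 + 2 * inner ℝ G e + ‖e‖ ^ 2)) := hde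
        _ = f x - 1 / (2 * (β:ℝ)) * ‖G‖ ^ 2 + 1 / (2 * (β:ℝ)) * ‖e‖ ^ 2 := by
            field_simp; ring
    have h2 : 1 / (2 * (β:ℝ)) * ‖e‖ ^ 2 ≤ 1 / (2 * (β:ℝ)) * Δ ^ 2 := by
      apply mul_le_mul_of_nonneg_left he2 (by positivity)
    have : 1 / (2 * (β:ℝ)) * ‖G‖ ^ 2 ≤ f x - f (wseq (t+1)) + 1 / (2 * (β:ℝ)) * Δ ^ 2 := by
      linarith
    have hmul := mul_le_mul_of_nonneg_left this (by positivity : (0:ℝ) ≤ 2 * (β:ℝ))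
    calc ‖G‖ ^ 2 = 2 * (β:ℝ) * (1 / (2 * (β:ℝ)) * ‖G‖ ^ 2) := by field_simp
      _ ≤ 2 * (β:ℝ) * (f x - f (wseq (t+1)) + 1 / (2 * (β:ℝ)) * Δ ^ 2) := hmul
      _ = 2 * (β:ℝ) * (f x - f (wseq (t+1))) + Δ ^ 2 := by field_simp
  have hsum : ∑ t ∈ Finset.range T, ‖gradient f (wseq t)‖ ^ 2 ≤
      2 * (β : ℝ) * f (wseq 0) + T * Δ ^ 2 := by
    calc ∑ t ∈ Finset.range T, ‖gradient f (wseq t)‖ ^ 2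
        ≤ ∑ t ∈ Finset.range T, (2 * (β:ℝ) * (f (wseq t) - f (wseq (t+1))) + Δ ^ 2) :=
          Finset.sum_le_sum fun t _ => hkey t
      _ = 2 * (β:ℝ) * (f (wseq 0) - f (wseq T)) + T * Δ ^ 2 := by
          rw [Finset.sum_add_distrib, ← Finset.mul_sum, Finset.sum_range_sub' (fun n => f (wseq n))]
          simp [mul_comm]
      _ ≤ 2 * (β:ℝ) * f (wseq 0) + T * Δ ^ 2 := by
          nlinarith [hf0 (wseq T), hβR]
  have hTR : (0 : ℝ) < T := by exact_mod_cast hT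
  calc (1 / T : ℝ) * ∑ t ∈ Finset.range T, ‖gradient f (wseq t)‖ ^ 2
      ≤ (1 / T : ℝ) * (2 * (β:ℝ) * f (wseq 0) + T * Δ ^ 2) := by
        apply mul_le_mul_of_nonneg_left hsum (by positivity)
    _ = 2 * (β:ℝ) / T * f (wseq 0) + Δ ^ 2 := by field_simp
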